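/- Let d ≥ 1 and k ≤ d be natural numbers, let x ∈ ℝ^d with x_i ∈ {0,1} for every coordinate i, let w ∈ ℝ^d, let y ∈ {−1, 1}, and define ŵ ∈ ℝ^d by ŵ_i = y·w_i·(1 − 2x_i). Consider the feasible set D of perturbations δ ∈ ℝ^d such that x_i + δ_i ∈ {0,1} for all i and δ has at most k nonzero coordinates, and the set E of vectors ε ∈ ℝ^d with ε_i ∈ {0,1} for all i and at most k nonzero coordinates. Then the map δ ↦ ε with ε_i = δ_i·(1 − 2x_i) is a bijection from D onto E which for every δ ∈ D satisfies y·⟨w, x + δ⟩ = y·⟨w, x⟩ + ⟨ŵ, ε⟩; consequently min_{δ ∈ D} y·⟨w, x + δ⟩ = y·⟨w, x⟩ + min_{ε ∈ E} ⟨ŵ, ε⟩ (both minima exist since D and E are finite nonempty sets). -/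

import Mathlib

/-- Reduction of Section 5.3: for a binary input `x ∈ {0,1}^d`, label `y ∈ {-1,1}`,
linear-model gradient `w`, and `ŵ_i = y·w_i·(1 - 2x_i)`, the map `δ ↦ ε` with
`ε_i = δ_i·(1 - 2x_i)` is a bijection from the set `D` of `l0`-bounded feasible
perturbations onto the set `E` of binary vectors with at most `k` ones, it satisfies
`y·⟨w, x+δ⟩ = y·⟨w, x⟩ + ⟨ŵ, ε⟩`, the minima over `D` and `E` exist, and
`min_{δ ∈ D} y·⟨w, x+δ⟩ = y·⟨w, x⟩ + min_{ε ∈ E} ⟨ŵ, ε⟩`. -/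
theorem l0_attack_linear_reduction (d k : ℕ) (hd : 1 ≤ d) (hk : k ≤ d)
    (x w : Fin d → ℝ) (hx : ∀ i, x i = 0 ∨ x i = 1) (y : ℝ) (hy : y = -1 ∨ y = 1)
    (wh : Fin d → ℝ) (hwh : ∀ i, wh i = y * w i * (1 - 2 * x i))
    (D : Set (Fin d → ℝ))
    (hD : D = {δ | (∀ i, x i + δ i = 0 ∨ x i + δ i = 1) ∧ {i | δ i ≠ 0}.ncard ≤ k})
    (E : Set (Fin d → ℝ))
    (hE : E = {ε | (∀ i, ε i = 0 ∨ ε i = 1) ∧ {i | ε i ≠ 0}.ncard ≤ k})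
    (Φ : (Fin d → ℝ) → (Fin d → ℝ))
    (hΦ : ∀ δ, Φ δ = fun i => δ i * (1 - 2 * x i)) :
    Set.BijOn Φ D E ∧
    (∀ δ ∈ D, y * ∑ i, w i * (x i + δ i)
        = y * ∑ i, w i * x i + ∑ i, wh i * Φ δ i) ∧
    (∃ a, IsLeast ((fun δ => y * ∑ i, w i * (x i + δ i)) '' D) a) ∧
    (∃ b, IsLeast ((fun ε => ∑ i, wh i * ε i) '' E) b) ∧
    sInf ((fun δ => y * ∑ i, w i * (x i + δ i)) '' D)
      = y * ∑ i, w i * x i + sInf ((fun ε => ∑ i, wh i * ε i) '' E) := by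

  have hsq : ∀ i : Fin d, (1 - 2 * x i) * (1 - 2 * x i) = 1 := by
    intro i; rcases hx i with h | h <;> rw [h] <;> ring
  have hne : ∀ i : Fin d, (1 - 2 * x i) ≠ 0 := by
    intro i; rcases hx i with h | h <;> rw [h] <;> norm_num
  have hinv : ∀ δ, Φ (Φ δ) = δ := by
    intro δ; funext i
    simp only [hΦ]
    rw [mul_assoc, hsq, mul_one]
  have hcard : ∀ δ : Fin d → ℝ, {i | Φ δ i ≠ 0} = {i | δ i ≠ 0} := by
    intro δ; ext i
    simp only [hΦ, Set.mem_setOf_eq, mul_ne_zero_iff]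
    exact ⟨fun h => h.1, fun h => ⟨h, hne i⟩⟩
  have hDE : ∀ δ ∈ D, Φ δ ∈ E := by
    intro δ hδ
    rw [hD] at hδ; rw [hE]
    refine ⟨fun i => ?_, by rw [hcard]; exact hδ.2⟩
    rcases hx i with h | h <;> rcases hδ.1 i with h2 | h2 <;>
      simp only [hΦ] <;> rw [h] at h2 ⊢ <;>
      [left; right; right; left] <;> nlinarith
  have hED : ∀ ε ∈ E, Φ ε ∈ D := by
    intro ε hε
    rw [hE] at hε; rw [hD]
    refine ⟨fun i => ?_, by rw [hcard]; exact hε.2⟩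
    rcases hx i with h | h <;> rcases hε.1 i with h2 | h2 <;>
      simp only [hΦ] <;> rw [h, h2] <;> norm_num
  have hbij : Set.BijOn Φ D E := by
    refine ⟨hDE, fun a _ b _ hab => ?_, fun ε hε => ?_⟩
    · have := congrArg Φ hab; rwa [hinv, hinv] at this
    · exact ⟨Φ ε, hED ε hε, hinv ε⟩
  have hval : ∀ δ ∈ D, y * ∑ i, w i * (x i + δ i)
      = y * ∑ i, w i * x i + ∑ i, wh i * Φ δ i := by
    intro δ _
    have : ∀ i : Fin d, y * (w i * (x i + δ i))
        = y * (w i * x i) + wh i * Φ δ i := by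
      intro i
      simp only [hwh, hΦ]
      rcases hx i with h | h <;> rw [h] <;> ring
    calc y * ∑ i, w i * (x i + δ i) = ∑ i, y * (w i * (x i + δ i)) := by
          rw [Finset.mul_sum]
      _ = ∑ i, (y * (w i * x i) + wh i * Φ δ i) := by
          exact Finset.sum_congr rfl fun i _ => this i
      _ = y * ∑ i, w i * x i + ∑ i, wh i * Φ δ i := by
          rw [Finset.sum_add_distrib, Finset.mul_sum]
  have hEfin : E.Finite := by
    have : E ⊆ Set.pi Set.univ (fun _ : Fin d => ({0, 1} : Set ℝ)) := by
      intro ε hε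
      rw [hE] at hε
      intro i _
      rcases hε.1 i with h | h <;> simp [h]
    exact Set.Finite.subset (Set.Finite.pi fun _ => (Set.finite_singleton _).insert 0) this
  have hE0 : (0 : Fin d → ℝ) ∈ E := by
    rw [hE]
    refine ⟨fun i => Or.inl rfl, ?_⟩
    simp
  have hDeq : D = Φ '' E := by
    apply Set.Subset.antisymm
    · intro δ hδ; exact ⟨Φ δ, hDE δ hδ, hinv δ⟩
    · rintro _ ⟨ε, hε, rfl⟩; exact hED ε hε
  have hDfin : D.Finite := hDeq ▸ hEfin.image Φ
  have hD0 : (0 : Fin d → ℝ) ∈ D := by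
    rw [hD]
    refine ⟨fun i => by simpa using hx i, by simp⟩
  -- least elements
  have hleast : ∀ (s : Set ℝ), s.Finite → s.Nonempty → IsLeast s (sInf s) := by
    intro s hfin hne
    exact ⟨hne.csInf_mem hfin, fun t ht => csInf_le hfin.bddBelow ht⟩
  set f : (Fin d → ℝ) → ℝ := fun δ => y * ∑ i, w i * (x i + δ i) with hf
  set g : (Fin d → ℝ) → ℝ := fun ε => ∑ i, wh i * ε i with hg
  have hfa : IsLeast (f '' D) (sInf (f '' D)) :=
    hleast _ (hDfin.image f) (Set.Nonempty.image f ⟨0, hD0⟩)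
  have hfb : IsLeast (g '' E) (sInf (g '' E)) :=
    hleast _ (hEfin.image g) (Set.Nonempty.image g ⟨0, hE0⟩)
  refine ⟨hbij, hval, ⟨_, hfa⟩, ⟨_, hfb⟩, ?_⟩
  set c : ℝ := y * ∑ i, w i * x i
  have key : IsLeast (f '' D) (c + sInf (g '' E)) := by
    constructor
    · obtain ⟨ε, hε, hεeq⟩ := hfb.1
      refine ⟨Φ ε, hED ε hε, ?_⟩
      simp only [hf, hg] at hεeq ⊢
      rw [hval (Φ ε) (hED ε hε), hinv, hεeq]
    · rintro _ ⟨δ, hδ, rfl⟩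
      simp only [hf]
      rw [hval δ hδ]
      exact add_le_add_right (hfb.2 ⟨Φ δ, hDE δ hδ, rfl⟩) c
  exact hfa.unique key
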